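/- Let F, G, H : ℝ → ℝ be continuously differentiable with F, G, H nowhere equal to 1, and let Φ_F, Φ_G, Φ_H, Ψ_F, Ψ_G, Ψ_H : ℝ → ℝ be differentiable functions with Φ_F' = F²/(F−1), Φ_G' = G²/(G−1), Φ_H' = H²/(H−1), Ψ_F' = F/(F−1), Ψ_G' = G/(G−1), Ψ_H' = H/(H−1). Let U ⊆ ℝ³ be open and let a, b, c : U → ℝ be continuously differentiable functions of (x,y,t) such that at every point of U: Φ_F(a) + Φ_G(b) + Φ_H(c) = x, Ψ_F(a) + Ψ_G(b) + Ψ_H(c) = −y, a + b + c = −t, and the values F(a), G(b), H(c) are pairwise distinct. Then the functions R¹ = F(a), R² = G(b), R³ = H(c) satisfy on U the equations (e1): R¹_t = R²R³ R¹_x, R²_t = R¹R³ R²_x, R³_t = R¹R² R³_x, and (e2): R¹_y = (R² + R³ − R²R³) R¹_x, R²_y = (R¹ + R³ − R¹R³) R²_x, R³_y = (R¹ + R² − R¹R²) R³_x. -/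

import Mathlib

lemma helper (α β γ A B C δ0 δ1 δ2 : ℝ) (hα : α ≠ 1) (hβ : β ≠ 1) (hγ : γ ≠ 1)
    (h1 : α^2/(α-1)*A + β^2/(β-1)*B + γ^2/(γ-1)*C = δ0)
    (h2 : α/(α-1)*A + β/(β-1)*B + γ/(γ-1)*C = -δ1)
    (h3 : A + B + C = -δ2) :
    (α-β)*(α-γ)*A = (α-1)*(δ0 + (β+γ)*δ1 + β*γ*(δ2-δ1)) := by
  have hα' : α - 1 ≠ 0 := sub_ne_zero.mpr hα
  have hβ' : β - 1 ≠ 0 := sub_ne_zero.mpr hβ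
  have hγ' : γ - 1 ≠ 0 := sub_ne_zero.mpr hγ
  field_simp at h1 h2
  have key : ((β-1)*(γ-1)) * ((α-β)*(α-γ)*A)
      = ((β-1)*(γ-1)) * ((α-1)*(δ0 + (β+γ)*δ1 + β*γ*(δ2-δ1))) := by
    linear_combination h1 + (β*γ-β-γ)*h2 - β*γ*((α-1)*(β-1)*(γ-1))*h3
  exact mul_left_cancel₀ (mul_ne_zero hβ' hγ') key



/-- Partial derivative of `f : ℝⁿ → ℝ` in the `i`-th coordinate direction. -/
noncomputable def pd {n : ℕ} (i : Fin n) (f : (Fin n → ℝ) → ℝ) (x : Fin n → ℝ) : ℝ :=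
  fderiv ℝ f x (Pi.single i 1)

/-- Coordinates on ℝ³ are `(x,y,t)` with indices `(0,1,2)`.
Given C¹ functions `F, G, H` nowhere equal to 1, primitives `Φ_F, …, Ψ_H` of
`F²/(F−1), …, H/(H−1)`, and C¹ functions `a, b, c` on an open set `U` satisfying the
implicit relations `Φ_F(a)+Φ_G(b)+Φ_H(c) = x`, `Ψ_F(a)+Ψ_G(b)+Ψ_H(c) = −y`,
`a+b+c = −t` with `F(a), G(b), H(c)` pairwise distinct, the functions
`R¹ = F(a)`, `R² = G(b)`, `R³ = H(c)` satisfy the systems (e1) and (e2) on `U`. -/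
theorem stmt14 (F G H ΦF ΦG ΦH ΨF ΨG ΨH : ℝ → ℝ)
    (hF : ContDiff ℝ 1 F) (hG : ContDiff ℝ 1 G) (hH : ContDiff ℝ 1 H)
    (hF1 : ∀ s, F s ≠ 1) (hG1 : ∀ s, G s ≠ 1) (hH1 : ∀ s, H s ≠ 1)
    (hΦF : ∀ s, HasDerivAt ΦF ((F s) ^ 2 / (F s - 1)) s)
    (hΦG : ∀ s, HasDerivAt ΦG ((G s) ^ 2 / (G s - 1)) s)
    (hΦH : ∀ s, HasDerivAt ΦH ((H s) ^ 2 / (H s - 1)) s)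
    (hΨF : ∀ s, HasDerivAt ΨF (F s / (F s - 1)) s)
    (hΨG : ∀ s, HasDerivAt ΨG (G s / (G s - 1)) s)
    (hΨH : ∀ s, HasDerivAt ΨH (H s / (H s - 1)) s)
    (U : Set (Fin 3 → ℝ)) (hU : IsOpen U)
    (a b c : (Fin 3 → ℝ) → ℝ)
    (ha : ContDiffOn ℝ 1 a U) (hb : ContDiffOn ℝ 1 b U) (hc : ContDiffOn ℝ 1 c U)
    (heq1 : ∀ x ∈ U, ΦF (a x) + ΦG (b x) + ΦH (c x) = x 0)
    (heq2 : ∀ x ∈ U, ΨF (a x) + ΨG (b x) + ΨH (c x) = -(x 1))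
    (heq3 : ∀ x ∈ U, a x + b x + c x = -(x 2))
    (hdist : ∀ x ∈ U, F (a x) ≠ G (b x) ∧ F (a x) ≠ H (c x) ∧ G (b x) ≠ H (c x)) :
    (∀ x ∈ U,
      pd 2 (fun y => F (a y)) x = G (b x) * H (c x) * pd 0 (fun y => F (a y)) x ∧
      pd 2 (fun y => G (b y)) x = F (a x) * H (c x) * pd 0 (fun y => G (b y)) x ∧
      pd 2 (fun y => H (c y)) x = F (a x) * G (b x) * pd 0 (fun y => H (c y)) x) ∧
    (∀ x ∈ U,
      pd 1 (fun y => F (a y)) x =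
        (G (b x) + H (c x) - G (b x) * H (c x)) * pd 0 (fun y => F (a y)) x ∧
      pd 1 (fun y => G (b y)) x =
        (F (a x) + H (c x) - F (a x) * H (c x)) * pd 0 (fun y => G (b y)) x ∧
      pd 1 (fun y => H (c y)) x =
        (F (a x) + G (b x) - F (a x) * G (b x)) * pd 0 (fun y => H (c y)) x) := by
  have main : ∀ x ∈ U,
      (pd 2 (fun y => F (a y)) x = G (b x) * H (c x) * pd 0 (fun y => F (a y)) x ∧
       pd 2 (fun y => G (b y)) x = F (a x) * H (c x) * pd 0 (fun y => G (b y)) x ∧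
       pd 2 (fun y => H (c y)) x = F (a x) * G (b x) * pd 0 (fun y => H (c y)) x) ∧
      (pd 1 (fun y => F (a y)) x = (G (b x) + H (c x) - G (b x) * H (c x)) * pd 0 (fun y => F (a y)) x ∧
       pd 1 (fun y => G (b y)) x = (F (a x) + H (c x) - F (a x) * H (c x)) * pd 0 (fun y => G (b y)) x ∧
       pd 1 (fun y => H (c y)) x = (F (a x) + G (b x) - F (a x) * G (b x)) * pd 0 (fun y => H (c y)) x) := by
    intro x hx
    obtain ⟨hdFG, hdFH, hdGH⟩ := hdist x hx
    have hax : HasFDerivAt a (fderiv ℝ a x) x :=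
      ((ha.contDiffAt (hU.mem_nhds hx)).differentiableAt one_ne_zero).hasFDerivAt
    have hbx : HasFDerivAt b (fderiv ℝ b x) x :=
      ((hb.contDiffAt (hU.mem_nhds hx)).differentiableAt one_ne_zero).hasFDerivAt
    have hcx : HasFDerivAt c (fderiv ℝ c x) x :=
      ((hc.contDiffAt (hU.mem_nhds hx)).differentiableAt one_ne_zero).hasFDerivAt
    have hc1 : ((F (a x))^2/(F (a x)-1)) • fderiv ℝ a x + ((G (b x))^2/(G (b x)-1)) • fderiv ℝ b x
          + ((H (c x))^2/(H (c x)-1)) • fderiv ℝ c x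
        = (ContinuousLinearMap.proj 0 : (Fin 3 → ℝ) →L[ℝ] ℝ) := by
      have hsum := (((hΦF (a x)).comp_hasFDerivAt x hax).add
        ((hΦG (b x)).comp_hasFDerivAt x hbx)).add ((hΦH (c x)).comp_hasFDerivAt x hcx)
      have heqv : (fun y : Fin 3 → ℝ => y 0) =ᶠ[nhds x] (fun y => ΦF (a y) + ΦG (b y) + ΦH (c y)) := by
        filter_upwards [hU.mem_nhds hx] with y hy
        exact (heq1 y hy).symm
      exact (hsum.congr_of_eventuallyEq heqv).unique
        ((ContinuousLinearMap.proj 0 : (Fin 3 → ℝ) →L[ℝ] ℝ).hasFDerivAt)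
    have hc2 : ((F (a x))/(F (a x)-1)) • fderiv ℝ a x + ((G (b x))/(G (b x)-1)) • fderiv ℝ b x
          + ((H (c x))/(H (c x)-1)) • fderiv ℝ c x
        = -(ContinuousLinearMap.proj 1 : (Fin 3 → ℝ) →L[ℝ] ℝ) := by
      have hsum := (((hΨF (a x)).comp_hasFDerivAt x hax).add
        ((hΨG (b x)).comp_hasFDerivAt x hbx)).add ((hΨH (c x)).comp_hasFDerivAt x hcx)
      have heqv : (fun y : Fin 3 → ℝ => -(y 1)) =ᶠ[nhds x] (fun y => ΨF (a y) + ΨG (b y) + ΨH (c y)) := by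
        filter_upwards [hU.mem_nhds hx] with y hy
        exact (heq2 y hy).symm
      exact (hsum.congr_of_eventuallyEq heqv).unique
        ((ContinuousLinearMap.proj 1 : (Fin 3 → ℝ) →L[ℝ] ℝ).hasFDerivAt.neg)
    have hc3 : fderiv ℝ a x + fderiv ℝ b x + fderiv ℝ c x
        = -(ContinuousLinearMap.proj 2 : (Fin 3 → ℝ) →L[ℝ] ℝ) := by
      have hsum := (hax.add hbx).add hcx
      have heqv : (fun y : Fin 3 → ℝ => -(y 2)) =ᶠ[nhds x] (fun y => a y + b y + c y) := by
        filter_upwards [hU.mem_nhds hx] with y hy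
        exact (heq3 y hy).symm
      exact (hsum.congr_of_eventuallyEq heqv).unique
        ((ContinuousLinearMap.proj 2 : (Fin 3 → ℝ) →L[ℝ] ℝ).hasFDerivAt.neg)
    have pdF : ∀ i : Fin 3, pd i (fun y => F (a y)) x = deriv F (a x) * fderiv ℝ a x (Pi.single i 1) := by
      intro i
      have hFa : HasFDerivAt (fun y => F (a y)) (deriv F (a x) • fderiv ℝ a x) x :=
        ((hF.differentiable one_ne_zero) (a x)).hasDerivAt.comp_hasFDerivAt x hax
      unfold pd
      rw [hFa.fderiv]
      simp
    have pdG : ∀ i : Fin 3, pd i (fun y => G (b y)) x = deriv G (b x) * fderiv ℝ b x (Pi.single i 1) := by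
      intro i
      have hGb : HasFDerivAt (fun y => G (b y)) (deriv G (b x) • fderiv ℝ b x) x :=
        ((hG.differentiable one_ne_zero) (b x)).hasDerivAt.comp_hasFDerivAt x hbx
      unfold pd
      rw [hGb.fderiv]
      simp
    have pdH : ∀ i : Fin 3, pd i (fun y => H (c y)) x = deriv H (c x) * fderiv ℝ c x (Pi.single i 1) := by
      intro i
      have hHc : HasFDerivAt (fun y => H (c y)) (deriv H (c x) • fderiv ℝ c x) x :=
        ((hH.differentiable one_ne_zero) (c x)).hasDerivAt.comp_hasFDerivAt x hcx
      unfold pd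
      rw [hHc.fderiv]
      simp
    have s10 : (F (a x))^2/(F (a x)-1) * (fderiv ℝ a x (Pi.single 0 1)) + (G (b x))^2/(G (b x)-1) * (fderiv ℝ b x (Pi.single 0 1))
        + (H (c x))^2/(H (c x)-1) * (fderiv ℝ c x (Pi.single 0 1)) = 1 := by
      have := DFunLike.congr_fun hc1 (Pi.single (0 : Fin 3) 1)
      simpa using this
    have s20 : (F (a x))/(F (a x)-1) * (fderiv ℝ a x (Pi.single 0 1)) + (G (b x))/(G (b x)-1) * (fderiv ℝ b x (Pi.single 0 1))
        + (H (c x))/(H (c x)-1) * (fderiv ℝ c x (Pi.single 0 1)) = 0 := by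
      have := DFunLike.congr_fun hc2 (Pi.single (0 : Fin 3) 1)
      simpa using this
    have s30 : (fderiv ℝ a x (Pi.single 0 1)) + (fderiv ℝ b x (Pi.single 0 1)) + (fderiv ℝ c x (Pi.single 0 1)) = 0 := by
      have := DFunLike.congr_fun hc3 (Pi.single (0 : Fin 3) 1)
      simpa using this
    have s11 : (F (a x))^2/(F (a x)-1) * (fderiv ℝ a x (Pi.single 1 1)) + (G (b x))^2/(G (b x)-1) * (fderiv ℝ b x (Pi.single 1 1))
        + (H (c x))^2/(H (c x)-1) * (fderiv ℝ c x (Pi.single 1 1)) = 0 := by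
      have := DFunLike.congr_fun hc1 (Pi.single (1 : Fin 3) 1)
      simpa using this
    have s21 : (F (a x))/(F (a x)-1) * (fderiv ℝ a x (Pi.single 1 1)) + (G (b x))/(G (b x)-1) * (fderiv ℝ b x (Pi.single 1 1))
        + (H (c x))/(H (c x)-1) * (fderiv ℝ c x (Pi.single 1 1)) = -1 := by
      have := DFunLike.congr_fun hc2 (Pi.single (1 : Fin 3) 1)
      simpa using this
    have s31 : (fderiv ℝ a x (Pi.single 1 1)) + (fderiv ℝ b x (Pi.single 1 1)) + (fderiv ℝ c x (Pi.single 1 1)) = 0 := by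
      have := DFunLike.congr_fun hc3 (Pi.single (1 : Fin 3) 1)
      simpa using this
    have s12 : (F (a x))^2/(F (a x)-1) * (fderiv ℝ a x (Pi.single 2 1)) + (G (b x))^2/(G (b x)-1) * (fderiv ℝ b x (Pi.single 2 1))
        + (H (c x))^2/(H (c x)-1) * (fderiv ℝ c x (Pi.single 2 1)) = 0 := by
      have := DFunLike.congr_fun hc1 (Pi.single (2 : Fin 3) 1)
      simpa using this
    have s22 : (F (a x))/(F (a x)-1) * (fderiv ℝ a x (Pi.single 2 1)) + (G (b x))/(G (b x)-1) * (fderiv ℝ b x (Pi.single 2 1))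
        + (H (c x))/(H (c x)-1) * (fderiv ℝ c x (Pi.single 2 1)) = 0 := by
      have := DFunLike.congr_fun hc2 (Pi.single (2 : Fin 3) 1)
      simpa using this
    have s32 : (fderiv ℝ a x (Pi.single 2 1)) + (fderiv ℝ b x (Pi.single 2 1)) + (fderiv ℝ c x (Pi.single 2 1)) = -1 := by
      have := DFunLike.congr_fun hc3 (Pi.single (2 : Fin 3) 1)
      simpa using this
    have hA0 : (F (a x)-(G (b x)))*((F (a x))-(H (c x)))*(fderiv ℝ a x (Pi.single 0 1))
        = ((F (a x))-1)*((1) + ((G (b x))+(H (c x)))*(0) + (G (b x))*(H (c x))*((0)-(0))) :=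
      helper (F (a x)) (G (b x)) (H (c x)) (fderiv ℝ a x (Pi.single 0 1)) (fderiv ℝ b x (Pi.single 0 1)) (fderiv ℝ c x (Pi.single 0 1)) 1 0 0
        (by first | exact hF1 _ | exact hG1 _ | exact hH1 _)
        (by first | exact hF1 _ | exact hG1 _ | exact hH1 _)
        (by first | exact hF1 _ | exact hG1 _ | exact hH1 _)
        (by linear_combination s10) (by linear_combination s20) (by linear_combination s30)
    have hB0 : (G (b x)-(F (a x)))*((G (b x))-(H (c x)))*(fderiv ℝ b x (Pi.single 0 1))
        = ((G (b x))-1)*((1) + ((F (a x))+(H (c x)))*(0) + (F (a x))*(H (c x))*((0)-(0))) :=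
      helper (G (b x)) (F (a x)) (H (c x)) (fderiv ℝ b x (Pi.single 0 1)) (fderiv ℝ a x (Pi.single 0 1)) (fderiv ℝ c x (Pi.single 0 1)) 1 0 0
        (by first | exact hF1 _ | exact hG1 _ | exact hH1 _)
        (by first | exact hF1 _ | exact hG1 _ | exact hH1 _)
        (by first | exact hF1 _ | exact hG1 _ | exact hH1 _)
        (by linear_combination s10) (by linear_combination s20) (by linear_combination s30)
    have hC0 : (H (c x)-(F (a x)))*((H (c x))-(G (b x)))*(fderiv ℝ c x (Pi.single 0 1))
        = ((H (c x))-1)*((1) + ((F (a x))+(G (b x)))*(0) + (F (a x))*(G (b x))*((0)-(0))) :=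
      helper (H (c x)) (F (a x)) (G (b x)) (fderiv ℝ c x (Pi.single 0 1)) (fderiv ℝ a x (Pi.single 0 1)) (fderiv ℝ b x (Pi.single 0 1)) 1 0 0
        (by first | exact hF1 _ | exact hG1 _ | exact hH1 _)
        (by first | exact hF1 _ | exact hG1 _ | exact hH1 _)
        (by first | exact hF1 _ | exact hG1 _ | exact hH1 _)
        (by linear_combination s10) (by linear_combination s20) (by linear_combination s30)
    have hA1 : (F (a x)-(G (b x)))*((F (a x))-(H (c x)))*(fderiv ℝ a x (Pi.single 1 1))
        = ((F (a x))-1)*((0) + ((G (b x))+(H (c x)))*(1) + (G (b x))*(H (c x))*((0)-(1))) :=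
      helper (F (a x)) (G (b x)) (H (c x)) (fderiv ℝ a x (Pi.single 1 1)) (fderiv ℝ b x (Pi.single 1 1)) (fderiv ℝ c x (Pi.single 1 1)) 0 1 0
        (by first | exact hF1 _ | exact hG1 _ | exact hH1 _)
        (by first | exact hF1 _ | exact hG1 _ | exact hH1 _)
        (by first | exact hF1 _ | exact hG1 _ | exact hH1 _)
        (by linear_combination s11) (by linear_combination s21) (by linear_combination s31)
    have hB1 : (G (b x)-(F (a x)))*((G (b x))-(H (c x)))*(fderiv ℝ b x (Pi.single 1 1))
        = ((G (b x))-1)*((0) + ((F (a x))+(H (c x)))*(1) + (F (a x))*(H (c x))*((0)-(1))) :=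
      helper (G (b x)) (F (a x)) (H (c x)) (fderiv ℝ b x (Pi.single 1 1)) (fderiv ℝ a x (Pi.single 1 1)) (fderiv ℝ c x (Pi.single 1 1)) 0 1 0
        (by first | exact hF1 _ | exact hG1 _ | exact hH1 _)
        (by first | exact hF1 _ | exact hG1 _ | exact hH1 _)
        (by first | exact hF1 _ | exact hG1 _ | exact hH1 _)
        (by linear_combination s11) (by linear_combination s21) (by linear_combination s31)
    have hC1 : (H (c x)-(F (a x)))*((H (c x))-(G (b x)))*(fderiv ℝ c x (Pi.single 1 1))
        = ((H (c x))-1)*((0) + ((F (a x))+(G (b x)))*(1) + (F (a x))*(G (b x))*((0)-(1))) :=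
      helper (H (c x)) (F (a x)) (G (b x)) (fderiv ℝ c x (Pi.single 1 1)) (fderiv ℝ a x (Pi.single 1 1)) (fderiv ℝ b x (Pi.single 1 1)) 0 1 0
        (by first | exact hF1 _ | exact hG1 _ | exact hH1 _)
        (by first | exact hF1 _ | exact hG1 _ | exact hH1 _)
        (by first | exact hF1 _ | exact hG1 _ | exact hH1 _)
        (by linear_combination s11) (by linear_combination s21) (by linear_combination s31)
    have hA2 : (F (a x)-(G (b x)))*((F (a x))-(H (c x)))*(fderiv ℝ a x (Pi.single 2 1))
        = ((F (a x))-1)*((0) + ((G (b x))+(H (c x)))*(0) + (G (b x))*(H (c x))*((1)-(0))) :=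
      helper (F (a x)) (G (b x)) (H (c x)) (fderiv ℝ a x (Pi.single 2 1)) (fderiv ℝ b x (Pi.single 2 1)) (fderiv ℝ c x (Pi.single 2 1)) 0 0 1
        (by first | exact hF1 _ | exact hG1 _ | exact hH1 _)
        (by first | exact hF1 _ | exact hG1 _ | exact hH1 _)
        (by first | exact hF1 _ | exact hG1 _ | exact hH1 _)
        (by linear_combination s12) (by linear_combination s22) (by linear_combination s32)
    have hB2 : (G (b x)-(F (a x)))*((G (b x))-(H (c x)))*(fderiv ℝ b x (Pi.single 2 1))
        = ((G (b x))-1)*((0) + ((F (a x))+(H (c x)))*(0) + (F (a x))*(H (c x))*((1)-(0))) :=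
      helper (G (b x)) (F (a x)) (H (c x)) (fderiv ℝ b x (Pi.single 2 1)) (fderiv ℝ a x (Pi.single 2 1)) (fderiv ℝ c x (Pi.single 2 1)) 0 0 1
        (by first | exact hF1 _ | exact hG1 _ | exact hH1 _)
        (by first | exact hF1 _ | exact hG1 _ | exact hH1 _)
        (by first | exact hF1 _ | exact hG1 _ | exact hH1 _)
        (by linear_combination s12) (by linear_combination s22) (by linear_combination s32)
    have hC2 : (H (c x)-(F (a x)))*((H (c x))-(G (b x)))*(fderiv ℝ c x (Pi.single 2 1))
        = ((H (c x))-1)*((0) + ((F (a x))+(G (b x)))*(0) + (F (a x))*(G (b x))*((1)-(0))) :=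
      helper (H (c x)) (F (a x)) (G (b x)) (fderiv ℝ c x (Pi.single 2 1)) (fderiv ℝ a x (Pi.single 2 1)) (fderiv ℝ b x (Pi.single 2 1)) 0 0 1
        (by first | exact hF1 _ | exact hG1 _ | exact hH1 _)
        (by first | exact hF1 _ | exact hG1 _ | exact hH1 _)
        (by first | exact hF1 _ | exact hG1 _ | exact hH1 _)
        (by linear_combination s12) (by linear_combination s22) (by linear_combination s32)
    have hne1 : ((F (a x))-(G (b x)))*((F (a x))-(H (c x))) ≠ 0 :=
      mul_ne_zero (sub_ne_zero.mpr hdFG) (sub_ne_zero.mpr hdFH)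
    have hne2 : ((G (b x))-(F (a x)))*((G (b x))-(H (c x))) ≠ 0 :=
      mul_ne_zero (sub_ne_zero.mpr (Ne.symm hdFG)) (sub_ne_zero.mpr hdGH)
    have hne3 : ((H (c x))-(F (a x)))*((H (c x))-(G (b x))) ≠ 0 :=
      mul_ne_zero (sub_ne_zero.mpr (Ne.symm hdFH)) (sub_ne_zero.mpr (Ne.symm hdGH))
    have rA2 : (fderiv ℝ a x (Pi.single 2 1)) = (G (b x))*(H (c x)) * (fderiv ℝ a x (Pi.single 0 1)) :=
      mul_left_cancel₀ hne1 (by linear_combination hA2 - (G (b x))*(H (c x)) * hA0)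
    have rB2 : (fderiv ℝ b x (Pi.single 2 1)) = (F (a x))*(H (c x)) * (fderiv ℝ b x (Pi.single 0 1)) :=
      mul_left_cancel₀ hne2 (by linear_combination hB2 - (F (a x))*(H (c x)) * hB0)
    have rC2 : (fderiv ℝ c x (Pi.single 2 1)) = (F (a x))*(G (b x)) * (fderiv ℝ c x (Pi.single 0 1)) :=
      mul_left_cancel₀ hne3 (by linear_combination hC2 - (F (a x))*(G (b x)) * hC0)
    have rA1 : (fderiv ℝ a x (Pi.single 1 1)) = ((G (b x))+(H (c x))-(G (b x))*(H (c x))) * (fderiv ℝ a x (Pi.single 0 1)) :=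
      mul_left_cancel₀ hne1 (by linear_combination hA1 - ((G (b x))+(H (c x))-(G (b x))*(H (c x))) * hA0)
    have rB1 : (fderiv ℝ b x (Pi.single 1 1)) = ((F (a x))+(H (c x))-(F (a x))*(H (c x))) * (fderiv ℝ b x (Pi.single 0 1)) :=
      mul_left_cancel₀ hne2 (by linear_combination hB1 - ((F (a x))+(H (c x))-(F (a x))*(H (c x))) * hB0)
    have rC1 : (fderiv ℝ c x (Pi.single 1 1)) = ((F (a x))+(G (b x))-(F (a x))*(G (b x))) * (fderiv ℝ c x (Pi.single 0 1)) :=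
      mul_left_cancel₀ hne3 (by linear_combination hC1 - ((F (a x))+(G (b x))-(F (a x))*(G (b x))) * hC0)
    refine ⟨⟨?_, ?_, ?_⟩, ?_, ?_, ?_⟩
    · rw [pdF 2, pdF 0, rA2]; ring
    · rw [pdG 2, pdG 0, rB2]; ring
    · rw [pdH 2, pdH 0, rC2]; ring
    · rw [pdF 1, pdF 0, rA1]; ring
    · rw [pdG 1, pdG 0, rB1]; ring
    · rw [pdH 1, pdH 0, rC1]; ring
  exact ⟨fun x hx => (main x hx).1, fun x hx => (main x hx).2⟩
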